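/- (Euclid, Elements XI.20 / Menelaus, Spherics Prop. 5 / Pappus, Collection VI.1: the triangle inequality for angles at a solid angle, equivalently for spherical triangles.) Let V be a real inner product space and let x, y, z be nonzero vectors in V. Then the angle between x and z is at most the sum of the angle between x and y and the angle between y and z: InnerProductGeometry.angle x z ≤ InnerProductGeometry.angle x y + InnerProductGeometry.angle y z. -/

import Mathlib

open Real InnerProductGeometry RealInnerProductSpace

private lemma arccos_antitone {p q : ℝ} (h : p ≤ q) : Real.arccos q ≤ Real.arccos p := by
  have := Real.monotone_arcsin h
  simp only [Real.arccos]
  linarith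

private lemma unit_key {V : Type*} [NormedAddCommGroup V] [InnerProductSpace ℝ V]
    {x y z : V} (hx : ‖x‖ = 1) (hy : ‖y‖ = 1) (hz : ‖z‖ = 1) :
    angle x z ≤ angle x y + angle y z := by
  set a : ℝ := (inner ℝ x y : ℝ) with ha
  set b : ℝ := (inner ℝ y z : ℝ) with hb
  set c : ℝ := (inner ℝ x z : ℝ) with hc
  have hax : |a| ≤ 1 := by
    have := abs_real_inner_le_norm x y; rw [hx, hy] at this; simpa using this
  have hbx : |b| ≤ 1 := by
    have := abs_real_inner_le_norm y z; rw [hy, hz] at this; simpa using this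
  have hcx : |c| ≤ 1 := by
    have := abs_real_inner_le_norm x z; rw [hx, hz] at this; simpa using this
  have hxy : angle x y = Real.arccos a := by
    rw [angle, hx, hy]; norm_num; rfl
  have hyz : angle y z = Real.arccos b := by
    rw [angle, hy, hz]; norm_num; rfl
  have hxz : angle x z = Real.arccos c := by
    rw [angle, hx, hz]; norm_num; rfl
  -- key inequality: c ≥ a*b - √(1-a²)·√(1-b²)
  have hyx : (inner ℝ y x : ℝ) = a := by rw [real_inner_comm]
  have hzy : (inner ℝ z y : ℝ) = b := by rw [real_inner_comm]
  have hinner : (inner ℝ (x - a • y) (z - b • y) : ℝ) = c - a * b := by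
    simp only [inner_sub_left, inner_sub_right, real_inner_smul_left, real_inner_smul_right,
      real_inner_self_eq_norm_sq, hy, hyx, hzy, ← ha, ← hb, ← hc]
    ring
  have hnu : ‖x - a • y‖ = Real.sqrt (1 - a ^ 2) := by
    rw [← Real.sqrt_sq (norm_nonneg _)]
    congr 1
    rw [← real_inner_self_eq_norm_sq]
    simp only [inner_sub_left, inner_sub_right, real_inner_smul_left, real_inner_smul_right,
      real_inner_self_eq_norm_sq, hx, hy, hyx, ← ha, norm_smul, Real.norm_eq_abs, mul_one, sq_abs]
    ring
  have hnw : ‖z - b • y‖ = Real.sqrt (1 - b ^ 2) := by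
    rw [← Real.sqrt_sq (norm_nonneg _)]
    congr 1
    rw [← real_inner_self_eq_norm_sq]
    simp only [inner_sub_left, inner_sub_right, real_inner_smul_left, real_inner_smul_right,
      real_inner_self_eq_norm_sq, hz, hy, hzy, ← hb, norm_smul, Real.norm_eq_abs, mul_one, sq_abs]
    ring
  have key : a * b - Real.sqrt (1 - a ^ 2) * Real.sqrt (1 - b ^ 2) ≤ c := by
    have h1 : -(‖x - a • y‖ * ‖z - b • y‖) ≤ (inner ℝ (x - a • y) (z - b • y) : ℝ) :=
      neg_le_of_abs_le (abs_real_inner_le_norm _ _)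
    rw [hinner, hnu, hnw] at h1
    linarith
  have hcos : Real.cos (Real.arccos a + Real.arccos b)
      = a * b - Real.sqrt (1 - a ^ 2) * Real.sqrt (1 - b ^ 2) := by
    rw [Real.cos_add, Real.cos_arccos (neg_le_of_abs_le hax) (le_of_abs_le hax),
      Real.cos_arccos (neg_le_of_abs_le hbx) (le_of_abs_le hbx),
      Real.sin_arccos, Real.sin_arccos]
  rw [hxy, hyz, hxz]
  by_cases hpi : Real.arccos a + Real.arccos b ≤ Real.pi
  · have h2 : Real.arccos c ≤ Real.arccos (Real.cos (Real.arccos a + Real.arccos b)) := by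
      exact arccos_antitone (by rw [hcos]; exact key)
    rwa [Real.arccos_cos (by linarith [Real.arccos_nonneg a, Real.arccos_nonneg b]) hpi] at h2
  · exact le_trans (Real.arccos_le_pi c) (le_of_not_ge hpi)

/-- The triangle inequality for the face angles of a solid angle (Euclid XI.20), equivalently
the triangle inequality for spherical triangles (Menelaus, Spherics Prop. 5). -/
theorem angle_triangle_inequality {V : Type*} [NormedAddCommGroup V] [InnerProductSpace ℝ V]
    (x y z : V) (hx : x ≠ 0) (hy : y ≠ 0) (hz : z ≠ 0) :
    InnerProductGeometry.angle x z ≤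
      InnerProductGeometry.angle x y + InnerProductGeometry.angle y z := by
  have hx' : (0:ℝ) < ‖x‖⁻¹ := inv_pos.2 (norm_pos_iff.2 hx)
  have hy' : (0:ℝ) < ‖y‖⁻¹ := inv_pos.2 (norm_pos_iff.2 hy)
  have hz' : (0:ℝ) < ‖z‖⁻¹ := inv_pos.2 (norm_pos_iff.2 hz)
  have h := unit_key (x := ‖x‖⁻¹ • x) (y := ‖y‖⁻¹ • y) (z := ‖z‖⁻¹ • z)
    (norm_smul_inv_norm hx) (norm_smul_inv_norm hy) (norm_smul_inv_norm hz)
  simpa [angle_smul_left_of_pos _ _ hx', angle_smul_left_of_pos _ _ hy',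
    angle_smul_left_of_pos _ _ hz', angle_smul_right_of_pos _ _ hy',
    angle_smul_right_of_pos _ _ hz'] using h
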